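/- Assume in addition that C is braided monoidal, and let n ≥ 0. Then the class VPol_n of very strong polynomial functors of degree ≤ n is closed under the following operations: (1) translation: if F ∈ VPol_n then τ_x(F) ∈ VPol_n for every object x of C; (2) kernels of epimorphisms: if 0 → G → F₁ → F₂ → 0 is a short exact sequence in Fct(C, A) with F₁ ∈ VPol_n and F₂ ∈ VPol_n, then G ∈ VPol_n; (3) extensions: if 0 → F₃ → H → F₄ → 0 is a short exact sequence in Fct(C, A) with F₃ ∈ VPol_n and F₄ ∈ VPol_n, then H ∈ VPol_n. -/

import Mathlib

open CategoryTheory CategoryTheory.Limits CategoryTheory.MonoidalCategory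

variable {C : Type*} [Category C] [MonoidalCategory C]
variable {A : Type*} [Category A] [Abelian A]

/-- The translation endofunctor `τ_x` of `Fct(C, A)`: precomposition with `x ⊗ -`. -/
noncomputable def tauF (A : Type*) [Category A] (x : C) : (C ⥤ A) ⥤ (C ⥤ A) :=
  (Functor.whiskeringLeft C C A).obj (tensorLeft x)

/-- The component `i_x(F) : F ⟶ τ_x F`, whose component at `c` is
`F` applied to `c ≅ 𝟙 ⊗ c ⟶ x ⊗ c`. -/
def iApp (hI : IsInitial (𝟙_ C)) (x : C) (F : C ⥤ A) : F ⟶ tensorLeft x ⋙ F where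
  app c := F.map ((λ_ c).inv ≫ hI.to x ▷ c)
  naturality c c' f := by
    dsimp
    rw [← F.map_comp, ← F.map_comp]
    congr 1
    rw [leftUnitor_inv_naturality_assoc, whisker_exchange, Category.assoc]

/-- The natural transformation `i_x : Id ⟶ τ_x` of endofunctors of `Fct(C, A)`. -/
noncomputable def iNT (hI : IsInitial (𝟙_ C)) (x : C) :
    𝟭 (C ⥤ A) ⟶ tauF A x where
  app F := iApp hI x F
  naturality F G η := by
    ext c
    exact (η.naturality _).symm

/-- The evanescence endofunctor `κ_x = ker(i_x)` of `Fct(C, A)`. -/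
noncomputable def kappaF (hI : IsInitial (𝟙_ C)) (x : C) : (C ⥤ A) ⥤ (C ⥤ A) :=
  kernel (iNT (A := A) hI x)

/-- The difference endofunctor `δ_x = coker(i_x)` of `Fct(C, A)`. -/
noncomputable def deltaF (hI : IsInitial (𝟙_ C)) (x : C) : (C ⥤ A) ⥤ (C ⥤ A) :=
  cokernel (iNT (A := A) hI x)

/-- `VPolAux hI (n+1) F` says that `F` is very strong polynomial of degree `≤ n`;
`VPolAux hI 0 F` says that `F` is the zero functor (degree `≤ -1`). -/
def VPolAux (hI : IsInitial (𝟙_ C)) : ℕ → (C ⥤ A) → Prop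
  | 0 => fun F => IsZero F
  | n + 1 => fun F => ∀ x : C,
      IsZero ((kappaF hI x).obj F) ∧ VPolAux hI n ((deltaF hI x).obj F)

/-- `VPol hI n F` : `F` is very strong polynomial of degree `≤ n`
(with `VPol_m = {0}` for `m < 0`). -/
def VPol (hI : IsInitial (𝟙_ C)) (n : ℤ) (F : C ⥤ A) : Prop :=
  VPolAux hI (n + 1).toNat F

section Aux

-- instances
noncomputable instance (x : C) : PreservesFiniteLimits (tauF A x) :=
  ⟨fun J _ _ => inferInstanceAs (PreservesLimitsOfShape J ((Functor.whiskeringLeft C C A).obj (tensorLeft x)))⟩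

noncomputable instance (x : C) : PreservesFiniteColimits (tauF A x) :=
  ⟨fun J _ _ => inferInstanceAs (PreservesColimitsOfShape J ((Functor.whiskeringLeft C C A).obj (tensorLeft x)))⟩

instance (x : C) : (tauF A x).PreservesZeroMorphisms where
  map_zero F G := by ext c; rfl

variable (hI : IsInitial (𝟙_ C))

noncomputable def kappaObjIso (x : C) (F : C ⥤ A) :
    (kappaF hI x).obj F ≅ kernel ((iNT (A := A) hI x).app F) :=
  PreservesKernel.iso ((evaluation (C ⥤ A) (C ⥤ A)).obj F) (iNT hI x)

noncomputable def deltaObjIso (x : C) (F : C ⥤ A) :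
    (deltaF hI x).obj F ≅ cokernel ((iNT (A := A) hI x).app F) :=
  PreservesCokernel.iso ((evaluation (C ⥤ A) (C ⥤ A)).obj F) (iNT hI x)

lemma isZero_kappa_iff (x : C) (F : C ⥤ A) :
    IsZero ((kappaF hI x).obj F) ↔ Mono ((iNT (A := A) hI x).app F) := by
  constructor
  · intro h
    exact Preadditive.mono_of_isZero_kernel _ (h.of_iso (kappaObjIso hI x F).symm)
  · intro h
    refine IsZero.of_iso ?_ (kappaObjIso hI x F)
    refine IsZero.of_mono_eq_zero (kernel.ι _) ?_
    rw [← cancel_mono ((iNT (A := A) hI x).app F), kernel.condition, zero_comp]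

lemma VPolAux.of_iso : ∀ {n : ℕ} {F G : C ⥤ A}, VPolAux hI n F → (F ≅ G) → VPolAux hI n G
  | 0, _, _, h, e => IsZero.of_iso h e.symm
  | n + 1, _, _, h, e => fun x =>
      ⟨((h x).1).of_iso ((kappaF hI x).mapIso e).symm,
       VPolAux.of_iso (h x).2 ((deltaF hI x).mapIso e)⟩

section Braided
variable [BraidedCategory C]

lemma theta_key (x y c : C) (t : 𝟙_ C ⟶ y) :
    (x ◁ ((λ_ c).inv ≫ t ▷ c)) ≫ (α_ x y c).inv ≫ (β_ x y).hom ▷ c ≫ (α_ y x c).hom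
      = (λ_ (x ⊗ c)).inv ≫ t ▷ (x ⊗ c) := by
  have hb : (β_ x (𝟙_ C)).hom = (ρ_ x).hom ≫ (λ_ x).inv := by
    rw [← braiding_leftUnitor x]; simp
  rw [MonoidalCategory.whiskerLeft_comp, Category.assoc,
    associator_inv_naturality_middle_assoc, ← comp_whiskerRight_assoc,
    BraidedCategory.braiding_naturality_right, hb]
  simp only [comp_whiskerRight, Category.assoc, associator_naturality_left,
    leftUnitor_tensor_inv]
  monoidal

noncomputable def thetaIso (x y : C) (F : C ⥤ A) :
    (tauF A y).obj ((tauF A x).obj F) ≅ (tauF A x).obj ((tauF A y).obj F) :=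
  NatIso.ofComponents
    (fun c => F.mapIso ((α_ x y c).symm ≪≫ whiskerRightIso (β_ x y) c ≪≫ α_ y x c))
    (fun f => by
      dsimp [tauF]
      rw [← F.map_comp, ← F.map_comp]
      congr 1
      simp only [Category.assoc, whiskerRightIso_hom]
      rw [associator_inv_naturality_right_assoc, whisker_exchange_assoc,
        associator_naturality_right])

lemma iNT_tau_comm (x y : C) (F : C ⥤ A) :
    (iNT (A := A) hI y).app ((tauF A x).obj F) ≫ (thetaIso x y F).hom =
      (tauF A x).map ((iNT (A := A) hI y).app F) := by
  ext c
  dsimp [iNT, iApp, tauF, thetaIso]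
  show F.map _ ≫ F.map ((α_ x y c).inv ≫ (β_ x y).hom ▷ c ≫ (α_ y x c).hom) = _
  rw [← F.map_comp]
  congr 1
  exact theta_key x y c (hI.to y)

end Braided

noncomputable def phiSC (x : C) (S : ShortComplex (C ⥤ A)) : S ⟶ S.map (tauF A x) :=
  ShortComplex.homMk ((iNT hI x).app S.X₁) ((iNT hI x).app S.X₂) ((iNT hI x).app S.X₃)
    ((iNT hI x).naturality S.f).symm ((iNT hI x).naturality S.g).symm

noncomputable def snakeD (x : C) (S : ShortComplex (C ⥤ A)) (hS : S.ShortExact) :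
    ShortComplex.SnakeInput (C ⥤ A) where
  L₀ := kernel (phiSC hI x S)
  L₁ := S
  L₂ := S.map (tauF A x)
  L₃ := cokernel (phiSC hI x S)
  v₀₁ := kernel.ι _
  v₁₂ := phiSC hI x S
  v₂₃ := cokernel.π _
  w₀₂ := kernel.condition _
  w₁₃ := cokernel.condition _
  h₀ := kernelIsKernel _
  h₃ := cokernelIsCokernel _
  L₁_exact := hS.exact
  epi_L₁_g := hS.epi_g
  L₂_exact := (hS.map_of_exact (tauF A x)).exact
  mono_L₂_f := (hS.map_of_exact (tauF A x)).mono_f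

noncomputable def kappaIsoOfIsLimit (x : C) (F : C ⥤ A) {P : C ⥤ A} {ι : P ⟶ F}
    {w : ι ≫ (iNT (A := A) hI x).app F = 0}
    (h : IsLimit (KernelFork.ofι ι w)) : P ≅ (kappaF hI x).obj F :=
  IsLimit.conePointUniqueUpToIso h
    (isLimitOfHasKernelOfPreservesLimit ((evaluation (C ⥤ A) (C ⥤ A)).obj F) (iNT hI x))

noncomputable def deltaIsoOfIsColimit (x : C) (F : C ⥤ A) {P : C ⥤ A}
    {π : (tauF A x).obj F ⟶ P}
    {w : (iNT (A := A) hI x).app F ≫ π = 0}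
    (h : IsColimit (CokernelCofork.ofπ π w)) : P ≅ (deltaF hI x).obj F :=
  IsColimit.coconePointUniqueUpToIso h
    (isColimitOfHasCokernelOfPreservesColimit ((evaluation (C ⥤ A) (C ⥤ A)).obj F) (iNT hI x))

lemma snakeD_L₃_shortExact (x : C) (S : ShortComplex (C ⥤ A)) (hS : S.ShortExact)
    (h₃ : IsZero ((kappaF hI x).obj S.X₃)) :
    (snakeD hI x S hS).L₃.ShortExact := by
  set D := snakeD hI x S hS with hD
  have hz : IsZero D.L₀.X₃ := IsZero.of_iso h₃ (kappaIsoOfIsLimit hI x S.X₃ D.h₀τ₃)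
  have : Epi D.L₂.g := (hS.map_of_exact (tauF A x)).epi_g
  exact { exact := D.L₃_exact, epi_g := D.epi_L₃_g,
          mono_f := D.L₂'_exact.mono_g (hz.eq_of_src _ _) }

lemma vpolAux_closure [BraidedCategory C] (n : ℕ) :
    (∀ (F : C ⥤ A) (x : C), VPolAux hI n F → VPolAux hI n ((tauF A x).obj F)) ∧
    (∀ S : ShortComplex (C ⥤ A), S.ShortExact →
      VPolAux hI n S.X₂ → VPolAux hI n S.X₃ → VPolAux hI n S.X₁) ∧
    (∀ S : ShortComplex (C ⥤ A), S.ShortExact →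
      VPolAux hI n S.X₁ → VPolAux hI n S.X₃ → VPolAux hI n S.X₂) := by
  induction n with
  | zero =>
    refine ⟨fun F x h => ?_, fun S hS h₂ h₃ => ?_, fun S hS h₁ h₃ => ?_⟩
    · exact Functor.isZero _ (fun c => (Functor.isZero_iff F).1 h (x ⊗ c))
    · have := hS.mono_f
      exact IsZero.of_mono S.f h₂
    · have := hS.mono_f
      have : Mono S.g := hS.exact.mono_g (h₁.eq_of_src _ _)
      exact IsZero.of_mono S.g h₃
  | succ n ih =>
    obtain ⟨ihτ, ihker, ihext⟩ := ih
    refine ⟨fun F x h y => ⟨?_, ?_⟩, fun S hS h₂ h₃ x => ⟨?_, ?_⟩,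
      fun S hS h₁ h₃ x => ⟨?_, ?_⟩⟩
    · -- translation, kappa
      rw [isZero_kappa_iff]
      have hm : Mono ((iNT (A := A) hI y).app F) := (isZero_kappa_iff hI y F).1 (h y).1
      have hm2 : Mono ((tauF A x).map ((iNT (A := A) hI y).app F)) := by
        rw [NatTrans.mono_iff_mono_app] at hm ⊢
        intro c
        exact hm (x ⊗ c)
      have hc : (iNT (A := A) hI y).app ((tauF A x).obj F) =
          (tauF A x).map ((iNT (A := A) hI y).app F) ≫ (thetaIso x y F).inv := by
        rw [Iso.eq_comp_inv, iNT_tau_comm]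
      rw [hc]
      exact mono_comp _ _
    · -- translation, delta
      refine VPolAux.of_iso hI (ihτ _ x (h y).2) ?_
      have hc : (tauF A x).map ((iNT (A := A) hI y).app F) ≫ (thetaIso x y F).inv =
          (iNT (A := A) hI y).app ((tauF A x).obj F) := by
        rw [Iso.comp_inv_eq]
        exact (iNT_tau_comm hI x y F).symm
      exact (tauF A x).mapIso (deltaObjIso hI y F) ≪≫
        PreservesCokernel.iso (tauF A x) _ ≪≫
        (cokernelCompIsIso ((tauF A x).map ((iNT (A := A) hI y).app F))
          (thetaIso x y F).inv).symm ≪≫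
        cokernelIsoOfEq hc ≪≫ (deltaObjIso hI y ((tauF A x).obj F)).symm
    · -- kernel, kappa
      have := hS.mono_f
      have hz2 : IsZero (snakeD hI x S hS).L₀.X₂ :=
        IsZero.of_iso (h₂ x).1 (kappaIsoOfIsLimit hI x S.X₂ (snakeD hI x S hS).h₀τ₂)
      have : Mono (snakeD hI x S hS).L₁.f := hS.mono_f
      have := (snakeD hI x S hS).mono_L₀_f
      exact IsZero.of_iso (IsZero.of_mono (snakeD hI x S hS).L₀.f hz2)
        (kappaIsoOfIsLimit hI x S.X₁ (snakeD hI x S hS).h₀τ₁).symm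
    · -- kernel, delta
      have hT := snakeD_L₃_shortExact hI x S hS (h₃ x).1
      refine VPolAux.of_iso hI (ihker (snakeD hI x S hS).L₃ hT ?_ ?_)
        (deltaIsoOfIsColimit hI x S.X₁ (snakeD hI x S hS).h₃τ₁)
      · exact VPolAux.of_iso hI (h₂ x).2
          (deltaIsoOfIsColimit hI x S.X₂ (snakeD hI x S hS).h₃τ₂).symm
      · exact VPolAux.of_iso hI (h₃ x).2
          (deltaIsoOfIsColimit hI x S.X₃ (snakeD hI x S hS).h₃τ₃).symm
    · -- extension, kappa
      have := hS.mono_f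
      have hz1 : IsZero (snakeD hI x S hS).L₀.X₁ :=
        IsZero.of_iso (h₁ x).1 (kappaIsoOfIsLimit hI x S.X₁ (snakeD hI x S hS).h₀τ₁)
      have hz3 : IsZero (snakeD hI x S hS).L₀.X₃ :=
        IsZero.of_iso (h₃ x).1 (kappaIsoOfIsLimit hI x S.X₃ (snakeD hI x S hS).h₀τ₃)
      exact IsZero.of_iso
        ((snakeD hI x S hS).L₀_exact.isZero_X₂ (hz1.eq_of_src _ _) (hz3.eq_of_tgt _ _))
        (kappaIsoOfIsLimit hI x S.X₂ (snakeD hI x S hS).h₀τ₂).symm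
    · -- extension, delta
      have hT := snakeD_L₃_shortExact hI x S hS (h₃ x).1
      refine VPolAux.of_iso hI (ihext (snakeD hI x S hS).L₃ hT ?_ ?_)
        (deltaIsoOfIsColimit hI x S.X₂ (snakeD hI x S hS).h₃τ₂)
      · exact VPolAux.of_iso hI (h₁ x).2
          (deltaIsoOfIsColimit hI x S.X₁ (snakeD hI x S hS).h₃τ₁).symm
      · exact VPolAux.of_iso hI (h₃ x).2
          (deltaIsoOfIsColimit hI x S.X₃ (snakeD hI x S hS).h₃τ₃).symm

end Aux

/-- `VPol_n` is closed under translation, kernels of epimorphisms, and extensions. -/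
theorem vpol_closure [BraidedCategory C] (hI : IsInitial (𝟙_ C)) (n : ℕ) :
    (∀ (F : C ⥤ A) (x : C), VPol hI n F → VPol hI n ((tauF A x).obj F)) ∧
    (∀ S : ShortComplex (C ⥤ A), S.ShortExact →
      VPol hI n S.X₂ → VPol hI n S.X₃ → VPol hI n S.X₁) ∧
    (∀ S : ShortComplex (C ⥤ A), S.ShortExact →
      VPol hI n S.X₁ → VPol hI n S.X₃ → VPol hI n S.X₂) := by
  obtain ⟨ht, hk, he⟩ := vpolAux_closure (A := A) hI (n + 1)
  exact ⟨fun F x h => ht F x h, fun S hS h₂ h₃ => hk S hS h₂ h₃,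
    fun S hS h₁ h₃ => he S hS h₁ h₃⟩
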